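/- Let S be a colorful graph, let c : E(S) → ZMod 2 be any charge function, and let vu, vw ∈ E(S) be two edges sharing the common endpoint v. Then there is a color-preserving isomorphism between the CFI graphs Γ(S, c) and Γ(S, c ⊕ χ_{vu} ⊕ χ_{vw}), where ⊕ denotes pointwise addition in ZMod 2. -/

import Mathlib

open SimpleGraph

variable {V : Type} [Fintype V] [DecidableEq V]

/-- Vertices of the CFI graph over a colorful graph `S`: pairs of a color `v ∈ V(S)`
and an even assignment on the edges incident to `v` (encoded as a function on all of
`Sym2 V` supported on the incidence set of `v`). -/
def CFIVert (S : SimpleGraph V) : Type :=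
  Σ v : V, {a : Sym2 V → ZMod 2 //
    (∀ e, a e ≠ 0 → e ∈ S.incidenceSet v) ∧ ∑ e : Sym2 V, a e = 0}

/-- The CFI graph of a colorful graph `S` with charge function `c`: vertices
`(u, a_u)` and `(v, a_v)` are adjacent iff `uv ∈ E(S)` and
`a_u(uv) + a_v(uv) = c(uv)`.  Its coloring is `Sigma.fst : CFIVert S → V`. -/
def CFI (S : SimpleGraph V) (c : Sym2 V → ZMod 2) : SimpleGraph (CFIVert S) where
  Adj x y := S.Adj x.1 y.1 ∧ x.2.1 s(x.1, y.1) + y.2.1 s(x.1, y.1) = c s(x.1, y.1)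
  symm := by
    constructor
    rintro ⟨u, a⟩ ⟨v, b⟩ ⟨hadj, hsum⟩
    refine ⟨hadj.symm, ?_⟩
    simp only [Sym2.eq_swap (a := v) (b := u)]
    rw [add_comm]; exact hsum
  loopless := ⟨fun x h => S.irrefl h.1⟩

/-- Flipping the charge on two edges `vu, vw ∈ E(S)` incident to a common vertex `v`
yields a color-isomorphic CFI graph: `Γ(S, c) ≅ Γ(S, c ⊕ χ_{vu} ⊕ χ_{vw})`, via an
isomorphism preserving the coloring `Sigma.fst`. -/
theorem CFI_iso_flip_incident_edges
    (S : SimpleGraph V) [DecidableRel S.Adj] (c : Sym2 V → ZMod 2)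
    (v u w : V) (hvu : S.Adj v u) (hvw : S.Adj v w) :
    ∃ φ : CFI S c ≃g
        CFI S (fun e => c e + (if e = s(v, u) then 1 else 0) +
          (if e = s(v, w) then 1 else 0)),
      ∀ x : CFIVert S, (φ x).1 = x.1 := by
  classical
  set δ : Sym2 V → ZMod 2 :=
    fun e => (if e = s(v, u) then 1 else 0) + (if e = s(v, w) then 1 else 0) with hδ
  have key : ∀ x : CFIVert S,
      (∀ e, (x.2.1 e + if x.1 = v then δ e else 0) ≠ 0 → e ∈ S.incidenceSet x.1) ∧
        ∑ e : Sym2 V, (x.2.1 e + if x.1 = v then δ e else 0) = 0 := by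
    rintro ⟨x, a, ha, hs⟩
    constructor
    · intro e he
      by_cases hx : x = v
      · subst hx
        simp only [if_pos rfl] at he
        by_cases h0 : a e = 0
        · rw [h0, zero_add] at he
          simp only [hδ] at he
          by_cases h1 : e = s(x, u)
          · subst h1; exact S.mk'_mem_incidenceSet_left_iff.2 hvu
          · rw [if_neg h1, zero_add] at he
            by_cases h2 : e = s(x, w)
            · subst h2; exact S.mk'_mem_incidenceSet_left_iff.2 hvw
            · exact absurd (if_neg h2) he
        · exact ha e h0
      · rw [if_neg hx, add_zero] at he
        exact ha e he
    · by_cases hx : x = v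
      · simp only [if_pos hx, Finset.sum_add_distrib, hs, hδ, zero_add,
          Finset.sum_ite_eq' Finset.univ, Finset.mem_univ, if_pos]
        decide
      · simp [if_neg hx, hs]
  set f : CFIVert S → CFIVert S :=
    fun x => ⟨x.1, ⟨fun e => x.2.1 e + if x.1 = v then δ e else 0, key x⟩⟩ with hf
  have finv : Function.Involutive f := by
    rintro ⟨x, a, ha, hs⟩
    simp only [hf]
    refine Sigma.eq rfl ?_
    refine Subtype.ext ?_
    funext e
    by_cases hx : x = v <;>
      simp [hx, add_assoc, CharTwo.add_self_eq_zero]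
  have hδeq : ∀ x y : CFIVert S, S.Adj x.1 y.1 →
      (if x.1 = v then δ s(x.1, y.1) else 0) + (if y.1 = v then δ s(x.1, y.1) else 0)
        = δ s(x.1, y.1) := by
    intro x y hadj
    by_cases hx : x.1 = v
    · have hy : ¬ y.1 = v := fun h => S.irrefl (v := v) (by rwa [hx, h] at hadj)
      rw [if_pos hx, if_neg hy, add_zero]
    · by_cases hy : y.1 = v
      · rw [if_neg hx, if_pos hy, zero_add]
      · rw [if_neg hx, if_neg hy, add_zero]
        have h1 : s(x.1, y.1) ≠ s(v, u) := by
          intro h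
          rcases Sym2.eq_iff.1 h with ⟨h', -⟩ | ⟨-, h'⟩
          exacts [hx h', hy h']
        have h2 : s(x.1, y.1) ≠ s(v, w) := by
          intro h
          rcases Sym2.eq_iff.1 h with ⟨h', -⟩ | ⟨-, h'⟩
          exacts [hx h', hy h']
        simp [hδ, h1, h2]
  refine ⟨⟨finv.toPerm, ?_⟩, fun x => rfl⟩
  intro x y
  show (S.Adj x.1 y.1 ∧ _) ↔ (S.Adj x.1 y.1 ∧ _)
  constructor
  · rintro ⟨hadj, heq⟩
    refine ⟨hadj, ?_⟩
    have h := hδeq x y hadj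
    simp only [Function.Involutive.coe_toPerm] at heq ⊢
    simp only [hf, Function.Involutive.coe_toPerm] at heq ⊢
    dsimp at heq ⊢
    linear_combination heq - h
  · rintro ⟨hadj, heq⟩
    refine ⟨hadj, ?_⟩
    have h := hδeq x y hadj
    simp only [Function.Involutive.coe_toPerm] at heq ⊢
    simp only [hf, Function.Involutive.coe_toPerm] at heq ⊢
    dsimp at heq ⊢
    linear_combination heq + h
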